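/- Let F₃ be the free Lie algebra over ℂ on three generators a = t¹², b = t²³, c = t¹³, and let I be the Lie ideal of F₃ generated by the three elements ⁅a, b + c⁆, ⁅b, c + a⁆, ⁅c, a + b⁆ (the relations [tⁱʲ, tʲᵏ + tᵏⁱ] = 0 for pairwise distinct i, j, k ∈ {1,2,3}, where tʲⁱ = tⁱʲ). Then the quotient Lie algebra F₃/I is isomorphic, as a Lie algebra over ℂ, to the product of the one-dimensional abelian Lie algebra ℂ and the free Lie algebra over ℂ on two generators; under this isomorphism the central one-dimensional factor is generated by the image of a + b + c and the free factor by the images of a and b. -/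

import Mathlib

attribute [local instance 100] LieRing.ofAssociativeRing

/-! Lie ring / Lie algebra structure on a binary product. -/

instance prodLieRing {L M : Type*} [LieRing L] [LieRing M] : LieRing (L × M) where
  bracket x y := (⁅x.1, y.1⁆, ⁅x.2, y.2⁆)
  add_lie x y z := Prod.ext (add_lie x.1 y.1 z.1) (add_lie x.2 y.2 z.2)
  lie_add x y z := Prod.ext (lie_add x.1 y.1 z.1) (lie_add x.2 y.2 z.2)
  lie_self x := Prod.ext (lie_self x.1) (lie_self x.2)
  leibniz_lie x y z := Prod.ext (leibniz_lie x.1 y.1 z.1) (leibniz_lie x.2 y.2 z.2)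

instance prodLieAlgebra {R L M : Type*} [CommRing R] [LieRing L] [LieRing M]
    [LieAlgebra R L] [LieAlgebra R M] : LieAlgebra R (L × M) where
  lie_smul t x y := Prod.ext (lie_smul t x.1 y.1) (lie_smul t x.2 y.2)

section Aux
variable {R : Type*} [CommRing R] {L : Type*} [LieRing L] [LieAlgebra R L]
variable {M : Type*} [LieRing M] [LieAlgebra R M]

/-- The quotient map as a Lie algebra hom. -/
def mkLieHom (I : LieIdeal R L) : L →ₗ⁅R⁆ L ⧸ I where
  toFun := LieSubmodule.Quotient.mk (N := I)
  map_add' _ _ := rfl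
  map_smul' _ _ := rfl
  map_lie' := rfl

theorem mkLieHom_apply (I : LieIdeal R L) (x : L) :
    mkLieHom I x = LieSubmodule.Quotient.mk (N := I) x := rfl

/-- Lift of a Lie hom vanishing on an ideal to the quotient. -/
def quotLift (I : LieIdeal R L) (f : L →ₗ⁅R⁆ M) (h : I ≤ f.ker) : (L ⧸ I) →ₗ⁅R⁆ M where
  toLinearMap := Submodule.liftQ I.toSubmodule f.toLinearMap
    (fun x hx => LieHom.mem_ker.mp (h hx))
  map_lie' := by
    intro u v
    obtain ⟨x, rfl⟩ := LieSubmodule.Quotient.surjective_mk' I u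
    obtain ⟨y, rfl⟩ := LieSubmodule.Quotient.surjective_mk' I v
    show Submodule.liftQ _ _ _ ⁅LieSubmodule.Quotient.mk (N := I) x,
        LieSubmodule.Quotient.mk (N := I) y⁆ = _
    rw [← LieSubmodule.Quotient.mk_bracket]
    exact f.map_lie x y

theorem quotLift_mk (I : LieIdeal R L) (f : L →ₗ⁅R⁆ M) (h : I ≤ f.ker) (x : L) :
    quotLift I f h (LieSubmodule.Quotient.mk (N := I) x) = f x := rfl

theorem freeLie_lieSpan_top (R : Type*) [CommRing R] (X : Type*) :
    LieSubalgebra.lieSpan R (FreeLieAlgebra R X) (Set.range (FreeLieAlgebra.of R)) = ⊤ := by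
  set S := LieSubalgebra.lieSpan R (FreeLieAlgebra R X) (Set.range (FreeLieAlgebra.of R)) with hS
  have hsub : ∀ x, FreeLieAlgebra.of R x ∈ S := fun x =>
    LieSubalgebra.subset_lieSpan ⟨x, rfl⟩
  let g : FreeLieAlgebra R X →ₗ⁅R⁆ S :=
    FreeLieAlgebra.lift R fun x => (⟨FreeLieAlgebra.of R x, hsub x⟩ : S)
  have key : S.incl.comp g = LieHom.id := FreeLieAlgebra.hom_ext fun x => by
    simp [g, FreeLieAlgebra.lift_of_apply]
  rw [eq_top_iff]
  intro w _
  have : S.incl (g w) = w := by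
    have := congrArg (fun F : FreeLieAlgebra R X →ₗ⁅R⁆ FreeLieAlgebra R X => F w) key
    simpa using this
  rw [← this]
  exact (g w).2

end Aux

/-- The quotient of the free Lie algebra on three generators `a = t¹²`, `b = t²³`, `c = t¹³`
by the Lie ideal generated by `⁅a, b + c⁆`, `⁅b, c + a⁆`, `⁅c, a + b⁆` is isomorphic to the
product of the one-dimensional abelian Lie algebra `ℂ` and the free Lie algebra on two
generators; the central factor is generated by the image of `a + b + c` and the free factor
by the images of `a` and `b`. -/
theorem quotient_freeLie3_iso_prod :
    ∀ (a b c : FreeLieAlgebra ℂ (Fin 3)),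
      a = FreeLieAlgebra.of ℂ 0 → b = FreeLieAlgebra.of ℂ 1 → c = FreeLieAlgebra.of ℂ 2 →
      ∀ I : LieIdeal ℂ (FreeLieAlgebra ℂ (Fin 3)),
        I = LieSubmodule.lieSpan ℂ (FreeLieAlgebra ℂ (Fin 3))
              {⁅a, b + c⁆, ⁅b, c + a⁆, ⁅c, a + b⁆} →
        ∃ e : (FreeLieAlgebra ℂ (Fin 3) ⧸ I) ≃ₗ⁅ℂ⁆ (ℂ × FreeLieAlgebra ℂ (Fin 2)),
          e (LieSubmodule.Quotient.mk (N := I) (a + b + c)) = (1, 0) ∧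
          e (LieSubmodule.Quotient.mk (N := I) a) = (0, FreeLieAlgebra.of ℂ 0) ∧
          e (LieSubmodule.Quotient.mk (N := I) b) = (0, FreeLieAlgebra.of ℂ 1) := by
  intro a b c ha hb hc I hI
  set x : FreeLieAlgebra ℂ (Fin 2) := FreeLieAlgebra.of ℂ 0 with hx
  set y : FreeLieAlgebra ℂ (Fin 2) := FreeLieAlgebra.of ℂ 1 with hy
  have prod_lie : ∀ p q : ℂ × FreeLieAlgebra ℂ (Fin 2), ⁅p, q⁆ = (⁅p.1, q.1⁆, ⁅p.2, q.2⁆) :=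
    fun _ _ => rfl
  -- the forward hom on the free Lie algebra
  let φ : FreeLieAlgebra ℂ (Fin 3) →ₗ⁅ℂ⁆ ℂ × FreeLieAlgebra ℂ (Fin 2) :=
    FreeLieAlgebra.lift ℂ ![(0, x), (0, y), (1, -x - y)]
  have hφa : φ a = (0, x) := by
    rw [ha]; simpa [φ] using FreeLieAlgebra.lift_of_apply ℂ _ (0 : Fin 3)
  have hφb : φ b = (0, y) := by
    rw [hb]; simpa [φ] using FreeLieAlgebra.lift_of_apply ℂ _ (1 : Fin 3)
  have hφc : φ c = (1, -x - y) := by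
    rw [hc]; simpa [φ] using FreeLieAlgebra.lift_of_apply ℂ _ (2 : Fin 3)
  have hker : I ≤ φ.ker := by
    rw [hI, LieSubmodule.lieSpan_le]
    rintro w (rfl | rfl | rfl) <;>
      rw [SetLike.mem_coe, LieHom.mem_ker, LieHom.map_lie, map_add, hφa, hφb, hφc,
        prod_lie] <;>
      refine Prod.ext (by simp [Ring.lie_def]) ?_
    · show ⁅x, y + (-x - y)⁆ = 0
      rw [show y + (-x - y) = -x by abel]; simp
    · show ⁅y, -x - y + x⁆ = 0
      rw [show -x - y + x = -y by abel]; simp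
    · show ⁅-x - y, x + y⁆ = 0
      rw [show -x - y = -(x + y) by abel, neg_lie, lie_self, neg_zero]
  let e' : (FreeLieAlgebra ℂ (Fin 3) ⧸ I) →ₗ⁅ℂ⁆ ℂ × FreeLieAlgebra ℂ (Fin 2) :=
    quotLift I φ hker
  have he' : ∀ w, e' (LieSubmodule.Quotient.mk (N := I) w) = φ w := fun _ => rfl
  -- generators lie in I
  have hgen : ∀ w ∈ ({⁅a, b + c⁆, ⁅b, c + a⁆, ⁅c, a + b⁆} :
      Set (FreeLieAlgebra ℂ (Fin 3))), w ∈ I := by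
    rw [hI]; exact fun w hw => LieSubmodule.subset_lieSpan hw
  have h1 : ⁅a, b + c⁆ ∈ I := hgen _ (by left; rfl)
  have h2 : ⁅b, c + a⁆ ∈ I := hgen _ (by right; left; rfl)
  have h3 : ⁅c, a + b⁆ ∈ I := hgen _ (by right; right; rfl)
  set s : FreeLieAlgebra ℂ (Fin 3) := a + b + c with hs
  set z : FreeLieAlgebra ℂ (Fin 3) ⧸ I := LieSubmodule.Quotient.mk (N := I) s with hz
  have hsa : ⁅s, a⁆ ∈ I := by
    have h : ⁅s, a⁆ = -⁅a, b + c⁆ := by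
      rw [show (-⁅a, b + c⁆ : FreeLieAlgebra ℂ (Fin 3)) = ⁅b + c, a⁆ from lie_skew _ _]
      rw [hs]; simp only [add_lie, lie_self, zero_add]
    rw [h]; exact neg_mem h1
  have hsb : ⁅s, b⁆ ∈ I := by
    have h : ⁅s, b⁆ = -⁅b, c + a⁆ := by
      rw [show (-⁅b, c + a⁆ : FreeLieAlgebra ℂ (Fin 3)) = ⁅c + a, b⁆ from lie_skew _ _]
      rw [hs]; simp only [add_lie, lie_self]; abel
    rw [h]; exact neg_mem h2
  have hsc : ⁅s, c⁆ ∈ I := by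
    have h : ⁅s, c⁆ = -⁅c, a + b⁆ := by
      rw [show (-⁅c, a + b⁆ : FreeLieAlgebra ℂ (Fin 3)) = ⁅a + b, c⁆ from lie_skew _ _]
      rw [hs]; simp only [add_lie, lie_self, add_zero]
    rw [h]; exact neg_mem h3
  -- the image of s is central
  let K : LieSubalgebra ℂ (FreeLieAlgebra ℂ (Fin 3) ⧸ I) :=
    { carrier := {w | ⁅z, w⁆ = 0}
      add_mem' := fun hu hv => by
        simp only [Set.mem_setOf_eq, lie_add] at *; rw [hu, hv, add_zero]
      zero_mem' := lie_zero z
      smul_mem' := fun t u hu => by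
        simp only [Set.mem_setOf_eq, lie_smul] at *; rw [hu, smul_zero]
      lie_mem' := fun {u v} hu hv => by
        simp only [Set.mem_setOf_eq] at *
        rw [leibniz_lie, hu, hv, zero_lie, lie_zero, add_zero] }
  have hmkmem : ∀ g : FreeLieAlgebra ℂ (Fin 3), ⁅s, g⁆ ∈ I →
      LieSubmodule.Quotient.mk (N := I) g ∈ K := by
    intro g hg
    show ⁅z, LieSubmodule.Quotient.mk (N := I) g⁆ = 0
    rw [hz, ← LieSubmodule.Quotient.mk_bracket]
    exact (LieSubmodule.Quotient.mk_eq_zero I).mpr hg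
  have hKtop : ∀ w : FreeLieAlgebra ℂ (Fin 3), LieSubmodule.Quotient.mk (N := I) w ∈ K := by
    intro w
    have hle : LieSubalgebra.lieSpan ℂ (FreeLieAlgebra ℂ (Fin 3))
        (Set.range (FreeLieAlgebra.of ℂ)) ≤ K.comap (mkLieHom I) := by
      rw [LieSubalgebra.lieSpan_le]
      rintro _ ⟨i, rfl⟩
      fin_cases i
      · exact hmkmem _ (ha ▸ hsa)
      · exact hmkmem _ (hb ▸ hsb)
      · exact hmkmem _ (hc ▸ hsc)
    have : w ∈ K.comap (mkLieHom I) := hle (by rw [freeLie_lieSpan_top]; trivial)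
    exact this
  have hcentral : ∀ w : FreeLieAlgebra ℂ (Fin 3) ⧸ I, ⁅z, w⁆ = 0 := by
    intro w
    obtain ⟨w, rfl⟩ := LieSubmodule.Quotient.surjective_mk' I w
    exact hKtop w
  have hcentral' : ∀ w : FreeLieAlgebra ℂ (Fin 3) ⧸ I, ⁅w, z⁆ = 0 := fun w => by
    rw [← lie_skew, hcentral, neg_zero]
  -- the backward map
  let f : FreeLieAlgebra ℂ (Fin 2) →ₗ⁅ℂ⁆ (FreeLieAlgebra ℂ (Fin 3) ⧸ I) :=
    FreeLieAlgebra.lift ℂ ![LieSubmodule.Quotient.mk (N := I) a,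
      LieSubmodule.Quotient.mk (N := I) b]
  have hfx : f x = LieSubmodule.Quotient.mk (N := I) a := by
    rw [hx]; simpa [f] using FreeLieAlgebra.lift_of_apply ℂ _ (0 : Fin 2)
  have hfy : f y = LieSubmodule.Quotient.mk (N := I) b := by
    rw [hy]; simpa [f] using FreeLieAlgebra.lift_of_apply ℂ _ (1 : Fin 2)
  let ψ : ℂ × FreeLieAlgebra ℂ (Fin 2) →ₗ⁅ℂ⁆ (FreeLieAlgebra ℂ (Fin 3) ⧸ I) :=
    { toFun := fun p => p.1 • z + f p.2
      map_add' := fun p q => by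
        show (p.1 + q.1) • z + f (p.2 + q.2) = _
        rw [add_smul, map_add]; abel
      map_smul' := fun t p => by
        show (t * p.1) • z + f (t • p.2) = t • (p.1 • z + f p.2)
        rw [mul_smul, map_smul, smul_add]
      map_lie' := fun {p q} => by
        show ⁅p.1, q.1⁆ • z + f ⁅p.2, q.2⁆ = ⁅p.1 • z + f p.2, q.1 • z + f q.2⁆
        have h0 : ⁅p.1, q.1⁆ = 0 := by rw [Ring.lie_def, mul_comm, sub_self]
        rw [h0, zero_smul, zero_add, LieHom.map_lie]
        simp [lie_add, add_lie, lie_smul, smul_lie, hcentral, hcentral'] }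
  -- e' ∘ ψ = id
  have hright : ∀ p : ℂ × FreeLieAlgebra ℂ (Fin 2), e' (ψ p) = p := by
    have hφs : φ s = (1, 0) := by
      rw [hs, map_add, map_add, hφa, hφb, hφc]
      refine Prod.ext (by simp) ?_
      show x + y + (-x - y) = 0
      abel
    have hcomp : ∀ u : FreeLieAlgebra ℂ (Fin 2), e' (f u) = (0, u) := by
      let inr : FreeLieAlgebra ℂ (Fin 2) →ₗ⁅ℂ⁆ ℂ × FreeLieAlgebra ℂ (Fin 2) :=
        { toFun := fun u => (0, u)
          map_add' := fun u v => by refine Prod.ext ?_ rfl; simp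
          map_smul' := fun t u => by refine Prod.ext ?_ rfl; simp
          map_lie' := fun {u v} => by
            refine Prod.ext ?_ rfl
            show (0 : ℂ) = ⁅(0 : ℂ), (0 : ℂ)⁆
            rw [Ring.lie_def]; simp }
      have : e'.comp f = inr := by
        apply FreeLieAlgebra.hom_ext
        intro i
        fin_cases i
        · show e' (f x) = (0, x)
          rw [hfx, he', hφa]
        · show e' (f y) = (0, y)
          rw [hfy, he', hφb]
      intro u
      have := congrArg (fun F : FreeLieAlgebra ℂ (Fin 2) →ₗ⁅ℂ⁆
        ℂ × FreeLieAlgebra ℂ (Fin 2) => F u) this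
      exact this
    intro p
    show e' (p.1 • z + f p.2) = p
    rw [map_add, map_smul, hz, he', hφs, hcomp]
    refine Prod.ext ?_ ?_ <;> simp
  -- ψ ∘ e' = id
  have hleft : ∀ q : FreeLieAlgebra ℂ (Fin 3) ⧸ I, ψ (e' q) = q := by
    have hback : ψ.comp (e'.comp (mkLieHom I)) = mkLieHom I := by
      apply FreeLieAlgebra.hom_ext
      intro i
      fin_cases i
      · show ψ (e' (LieSubmodule.Quotient.mk (N := I) (FreeLieAlgebra.of ℂ 0)))
            = mkLieHom I (FreeLieAlgebra.of ℂ 0)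
        rw [← ha, he', hφa]
        show (0 : ℂ) • z + f x = _
        rw [zero_smul, zero_add, hfx, ha]; rfl
      · show ψ (e' (LieSubmodule.Quotient.mk (N := I) (FreeLieAlgebra.of ℂ 1)))
            = mkLieHom I (FreeLieAlgebra.of ℂ 1)
        rw [← hb, he', hφb]
        show (0 : ℂ) • z + f y = _
        rw [zero_smul, zero_add, hfy, hb]; rfl
      · show ψ (e' (LieSubmodule.Quotient.mk (N := I) (FreeLieAlgebra.of ℂ 2)))
            = mkLieHom I (FreeLieAlgebra.of ℂ 2)
        rw [← hc, he', hφc]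
        show (1 : ℂ) • z + f (-x - y) = _
        rw [one_smul, show -x - y = -(x + y) by abel, map_neg, map_add,
          hfx, hfy]
        show mkLieHom I s + -(mkLieHom I a + mkLieHom I b) = mkLieHom I c
        rw [← map_add, ← map_neg, ← map_add]
        congr 1
        rw [hs]; abel
    intro q
    obtain ⟨w, rfl⟩ := LieSubmodule.Quotient.surjective_mk' I q
    have := congrArg (fun F : FreeLieAlgebra ℂ (Fin 3) →ₗ⁅ℂ⁆
      (FreeLieAlgebra ℂ (Fin 3) ⧸ I) => F w) hback
    exact this
  refine ⟨{ e' with invFun := ψ, left_inv := hleft, right_inv := hright }, ?_, ?_, ?_⟩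
  · show e' (LieSubmodule.Quotient.mk (N := I) (a + b + c)) = (1, 0)
    rw [he']
    rw [map_add, map_add, hφa, hφb, hφc]
    refine Prod.ext (by simp) ?_
    show x + y + (-x - y) = 0
    abel
  · show e' (LieSubmodule.Quotient.mk (N := I) a) = (0, x)
    rw [he', hφa]
  · show e' (LieSubmodule.Quotient.mk (N := I) b) = (0, y)
    rw [he', hφb]
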